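/- If a closed unbounded subset X ⊆ ℝ^n is bi-Lipschitz homeomorphic at infinity to ℝ^k for some k > 1, then there is a compact set K ⊆ ℝ^n such that X \ K is Lipschitz normally embedded. -/

import Mathlib

open Set Filter Metric

noncomputable section

/-- The inner (length) extended distance on a subset `X`: the infimum of lengths of
paths inside `X` joining `p` to `q`. -/
def innerEDist {E : Type*} [EMetricSpace E] (X : Set E) (p q : E) : ENNReal :=
  ⨅ (γ : Path p q) (_ : Set.range γ ⊆ X), eVariationOn (fun t => γ t) Set.univ

open scoped NNReal ENNReal

lemma lipschitz_evar {E : Type*} [PseudoEMetricSpace E] {f : unitInterval → E} {C : ℝ≥0}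
    (hf : LipschitzWith C f) : eVariationOn f Set.univ ≤ C := by
  apply iSup_le
  rintro ⟨m, ⟨u, hu, -⟩⟩
  have key : ∑ i ∈ Finset.range m, edist (u (i+1)) (u i) ≤ 1 := by
    have h1 : ∀ i, edist (u (i+1)) (u i) = ENNReal.ofReal ((u (i+1) : ℝ) - (u i : ℝ)) := by
      intro i
      rw [Subtype.edist_eq, edist_dist, Real.dist_eq, abs_of_nonneg]
      simpa using hu (Nat.le_succ i)
    calc ∑ i ∈ Finset.range m, edist (u (i+1)) (u i)
        = ENNReal.ofReal (∑ i ∈ Finset.range m, ((u (i+1) : ℝ) - (u i : ℝ))) := by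
          rw [ENNReal.ofReal_sum_of_nonneg]
          · exact Finset.sum_congr rfl fun i _ => h1 i
          · intro i _; simpa using hu (Nat.le_succ i)
      _ = ENNReal.ofReal ((u m : ℝ) - (u 0 : ℝ)) := by
          rw [Finset.sum_range_sub fun i => ((u i : ℝ))]
      _ ≤ ENNReal.ofReal 1 := by
          apply ENNReal.ofReal_le_ofReal
          have := (u m).2.2; have := (u 0).2.1; linarith
      _ = 1 := ENNReal.ofReal_one
  calc ∑ i ∈ Finset.range m, edist (f (u (i+1))) (f (u i))
      ≤ ∑ i ∈ Finset.range m, C * edist (u (i+1)) (u i) :=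
        Finset.sum_le_sum fun i _ => hf _ _
    _ = C * ∑ i ∈ Finset.range m, edist (u (i+1)) (u i) := (Finset.mul_sum _ _ _).symm
    _ ≤ C * 1 := by gcongr
    _ = C := mul_one _


section B
open Set

lemma innerEDist_le_of_lipschitz {E : Type*} [EMetricSpace E] (X : Set E) {p q : E}
    (g : ℝ → E) (T : ℝ) (hT : 0 ≤ T) (L : ℝ≥0)
    (hg : LipschitzOnWith L g (Icc 0 T)) (h0 : g 0 = p) (h1 : g T = q)
    (him : ∀ t ∈ Icc 0 T, g t ∈ X) :
    innerEDist X p q ≤ (L : ℝ≥0∞) * ENNReal.ofReal T := by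
  have hTnn : (⟨T, hT⟩ : ℝ≥0) = T.toNNReal := by
    ext; simp [Real.coe_toNNReal', max_eq_left hT]
  have hmem : ∀ t : unitInterval, T * (t : ℝ) ∈ Icc 0 T := by
    intro t
    constructor
    · exact mul_nonneg hT t.2.1
    · calc T * (t:ℝ) ≤ T * 1 := by
            apply mul_le_mul_of_nonneg_left t.2.2 hT
        _ = T := mul_one T
  set f : unitInterval → E := fun t => g (T * (t : ℝ)) with hfdef
  have hf : LipschitzWith (L * T.toNNReal) f := by
    intro s t
    calc edist (f s) (f t) ≤ L * edist (T * (s:ℝ)) (T * (t:ℝ)) := hg (hmem s) (hmem t)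
      _ = L * (T.toNNReal * edist s t) := by
          congr 1
          rw [Subtype.edist_eq, edist_dist, edist_dist, Real.dist_eq, Real.dist_eq,
            ← mul_sub, abs_mul, abs_of_nonneg hT, ENNReal.ofReal_mul hT,
            ENNReal.ofReal_eq_coe_nnreal hT, (show NNReal.mk T hT = T.toNNReal from hTnn)]
      _ = ↑(L * T.toNNReal) * edist s t := by
          rw [ENNReal.coe_mul]; ring
  let γ : Path p q :=
    { toFun := f
      continuous_toFun := hf.continuous
      source' := by simp only [hfdef]; rw [Set.Icc.coe_zero, mul_zero, h0]
      target' := by simp only [hfdef]; rw [Set.Icc.coe_one, mul_one, h1] }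
  have hrange : Set.range γ ⊆ X := by
    rintro x ⟨t, rfl⟩
    exact him _ (hmem t)
  calc innerEDist X p q ≤ eVariationOn (fun t => γ t) Set.univ := by
        exact (iInf_le _ γ).trans (iInf_le _ hrange)
    _ ≤ ↑(L * T.toNNReal) := lipschitz_evar hf
    _ = (L : ℝ≥0∞) * ENNReal.ofReal T := by
        rw [ENNReal.coe_mul, ENNReal.ofReal_eq_coe_nnreal hT, (show NNReal.mk T hT = T.toNNReal from hTnn)]

end B

section Helpers
open Set
variable {E : Type*}

lemma lip_congr [PseudoEMetricSpace E] {f g : ℝ → E} {L : ℝ≥0} {s : Set ℝ}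
    (h : EqOn f g s) (hf : LipschitzOnWith L f s) : LipschitzOnWith L g s :=
  fun x hx y hy => by rw [← h hx, ← h hy]; exact hf hx hy

lemma lip_glue [PseudoEMetricSpace E] {f : ℝ → E} {L : ℝ≥0} {a b c : ℝ}
    (hab : a ≤ b) (hbc : b ≤ c) (h1 : LipschitzOnWith L f (Icc a b))
    (h2 : LipschitzOnWith L f (Icc b c)) : LipschitzOnWith L f (Icc a c) := by
  have H : ∀ x ∈ Icc a c, ∀ y ∈ Icc a c, x ≤ y → edist (f x) (f y) ≤ L * edist x y := by
    intro x hx y hy hxy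
    rcases le_total y b with h | h
    · exact h1 ⟨hx.1, hxy.trans h⟩ ⟨hy.1, h⟩
    rcases le_total x b with h' | h'
    · calc edist (f x) (f y) ≤ edist (f x) (f b) + edist (f b) (f y) := edist_triangle _ _ _
        _ ≤ L * edist x b + L * edist b y :=
            add_le_add (h1 ⟨hx.1, h'⟩ ⟨hab, le_rfl⟩) (h2 ⟨le_rfl, hbc⟩ ⟨h, hy.2⟩)
        _ = L * (edist x b + edist b y) := (mul_add _ _ _).symm
        _ = L * edist x y := by
            congr 1
            rw [edist_dist, edist_dist, edist_dist, Real.dist_eq, Real.dist_eq, Real.dist_eq,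
              abs_of_nonpos (by linarith), abs_of_nonpos (by linarith),
              abs_of_nonpos (by linarith), ← ENNReal.ofReal_add (by linarith) (by linarith)]
            congr 1; ring
    · exact h2 ⟨h', hx.2⟩ ⟨h'.trans hxy, hy.2⟩
  intro x hx y hy
  rcases le_total x y with h | h
  · exact H x hx y hy h
  · rw [edist_comm, edist_comm x y]; exact H y hy x hx h

lemma lip_seg [NormedAddCommGroup E] [NormedSpace ℝ E] (x v : E) :
    LipschitzWith ‖v‖₊ (fun t : ℝ => x + t • v) := by
  apply LipschitzWith.of_dist_le_mul
  intro s t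
  rw [dist_eq_norm, Real.dist_eq]
  have : x + s • v - (x + t • v) = (s - t) • v := by
    rw [sub_smul]; abel
  rw [this, norm_smul, Real.norm_eq_abs]
  rw [coe_nnnorm]
  ring_nf
  exact le_rfl

lemma le_norm_of_sq {x y : ℝ} (hx : 0 ≤ x) (hy : 0 ≤ y) (h : x^2 ≤ y^2) : x ≤ y := by
  nlinarith

end Helpers

section Helpers2
open Set
variable {E : Type*}

lemma norm_scale_lip [NormedAddCommGroup E] [NormedSpace ℝ E] {m d : ℝ}
    (hm : 0 ≤ m) (hd : 0 < d) (x y : E) (hx : d ≤ ‖x‖) (hy : d ≤ ‖y‖) :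
    ‖(m / ‖x‖) • x - (m / ‖y‖) • y‖ ≤ (2 * m / d) * ‖x - y‖ := by
  have hnx : (0:ℝ) < ‖x‖ := hd.trans_le hx
  have hny : (0:ℝ) < ‖y‖ := hd.trans_le hy
  have hsplit : (m / ‖x‖) • x - (m / ‖y‖) • y
      = (m / ‖x‖) • (x - y) + ((m / ‖x‖) - (m / ‖y‖)) • y := by
    rw [smul_sub, sub_smul]; abel
  rw [hsplit]
  have h1 : ‖(m / ‖x‖) • (x - y)‖ ≤ (m / d) * ‖x - y‖ := by
    rw [norm_smul, Real.norm_eq_abs, abs_of_nonneg (by positivity)]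
    apply mul_le_mul_of_nonneg_right _ (norm_nonneg _)
    exact div_le_div_of_nonneg_left hm hd hx
  have h2 : ‖((m / ‖x‖) - (m / ‖y‖)) • y‖ ≤ (m / d) * ‖x - y‖ := by
    rw [norm_smul, Real.norm_eq_abs]
    have hd1 : |‖y‖ - ‖x‖| ≤ ‖x - y‖ := by
      rw [abs_sub_comm]; exact abs_norm_sub_norm_le x y
    have habs : |m / ‖x‖ - m / ‖y‖| * ‖y‖ = m * |‖y‖ - ‖x‖| / ‖x‖ := by
      rw [div_sub_div _ _ hnx.ne' hny.ne']
      have hnum : m * ‖y‖ - ‖x‖ * m = m * (‖y‖ - ‖x‖) := by ring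
      rw [hnum, abs_div, abs_mul, abs_of_nonneg hm,
        abs_of_nonneg (mul_pos hnx hny).le]
      field_simp
    calc |m / ‖x‖ - m / ‖y‖| * ‖y‖ = m * |‖y‖ - ‖x‖| / ‖x‖ := habs
      _ ≤ m * ‖x - y‖ / ‖x‖ := by gcongr
      _ ≤ m * ‖x - y‖ / d := by gcongr
      _ = m / d * ‖x - y‖ := by ring
  calc ‖(m / ‖x‖) • (x - y) + ((m / ‖x‖) - (m / ‖y‖)) • y‖
      ≤ ‖(m / ‖x‖) • (x - y)‖ + ‖((m / ‖x‖) - (m / ‖y‖)) • y‖ := norm_add_le _ _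
    _ ≤ (m / d) * ‖x - y‖ + (m / d) * ‖x - y‖ := add_le_add h1 h2
    _ = (2 * m / d) * ‖x - y‖ := by ring

end Helpers2

section Helpers3
open Set
open scoped RealInnerProductSpace
variable {E : Type*} [NormedAddCommGroup E] [InnerProductSpace ℝ E]

lemma chord_sq_bound {m t : ℝ} (x y : E) (hx : ‖x‖ = m) (hy : ‖y‖ = m)
    (ht0 : 0 ≤ t) (ht1 : t ≤ 1) :
    m ^ 2 - ‖y - x‖ ^ 2 / 4 ≤ ‖x + t • (y - x)‖ ^ 2 := by
  have e1 := norm_add_sq_real x (t • (y - x))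
  have e2 := norm_sub_sq_real y x
  have e3 : ⟪x, t • (y - x)⟫ = t * (⟪x, y⟫ - ⟪x, x⟫) := by
    rw [inner_smul_right, inner_sub_right]
  have e4 : ⟪x, x⟫ = ‖x‖ ^ 2 := real_inner_self_eq_norm_sq x
  have e5 : ⟪y, x⟫ = ⟪x, y⟫ := real_inner_comm x y
  have e6 : ‖t • (y - x)‖ ^ 2 = t ^ 2 * ‖y - x‖ ^ 2 := by
    rw [norm_smul, Real.norm_eq_abs, mul_pow, sq_abs]
  have hx2 : ‖x‖ ^ 2 = m ^ 2 := by rw [hx]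
  have hy2 : ‖y‖ ^ 2 = m ^ 2 := by rw [hy]
  have hinner : ⟪x, y⟫ = m ^ 2 - ‖y - x‖ ^ 2 / 2 := by linarith
  have key : ‖x + t • (y - x)‖ ^ 2 = m ^ 2 + (t ^ 2 - t) * ‖y - x‖ ^ 2 := by
    rw [e1, e3, e6, e4, hx2]
    linear_combination (2 * t) * hinner
  nlinarith [key, sq_nonneg (t - 1/2), sq_nonneg ‖y - x‖]

lemma vertical_sq_bound {s t : ℝ} (x w : E) (hw : ‖w‖ = 1) (hsw : 0 ≤ ⟪x, w⟫)
    (hs : 0 ≤ s) (ht : 0 ≤ t) : ‖x‖ ^ 2 ≤ ‖x + (t * s) • w‖ ^ 2 := by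
  have e1 := norm_add_sq_real x ((t * s) • w)
  have e3 : ⟪x, (t * s) • w⟫ = (t * s) * ⟪x, w⟫ := inner_smul_right _ _ _
  linarith [e1, e3, mul_nonneg (mul_nonneg ht hs) hsw, sq_nonneg ‖(t*s) • w‖]

lemma horizontal_sq_bound {s : ℝ} (c w : E) (hw : ‖w‖ = 1) (hcw : 0 ≤ ⟪c, w⟫) (hs : 0 ≤ s) :
    s ^ 2 ≤ ‖c + s • w‖ ^ 2 := by
  have e1 := norm_add_sq_real c (s • w)
  have e3 : ⟪c, s • w⟫ = s * ⟪c, w⟫ := inner_smul_right _ _ _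
  have e6 : ‖s • w‖ ^ 2 = s ^ 2 := by
    rw [norm_smul, Real.norm_eq_abs, mul_pow, sq_abs, hw]; ring
  linarith [e1, e3, mul_nonneg hs hcw, sq_nonneg ‖c‖]

end Helpers3

section Helpers4
open Set
open scoped RealInnerProductSpace

lemma exists_good_dir {k : ℕ} (hk : 1 < k) (a b : EuclideanSpace ℝ (Fin k))
    (ha : a ≠ 0) (hb : b ≠ 0) :
    ∃ w : EuclideanSpace ℝ (Fin k), ‖w‖ = 1 ∧ 0 ≤ ⟪a, w⟫ ∧ 0 ≤ ⟪b, w⟫ := by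
  by_cases hu : ‖b‖ • a + ‖a‖ • b = 0
  · -- a and b are anti-parallel; pick a unit vector orthogonal to a
    have hW : (ℝ ∙ a)ᗮ ≠ ⊥ := by
      intro hbot
      have h1 : Module.finrank ℝ (ℝ ∙ a) = 1 := finrank_span_singleton ha
      have h2 := Submodule.finrank_add_finrank_orthogonal (K := ℝ ∙ a) (𝕜 := ℝ)
      have h3 : Module.finrank ℝ (EuclideanSpace ℝ (Fin k)) = k :=
        finrank_euclideanSpace_fin
      rw [hbot, finrank_bot] at h2
      omega
    obtain ⟨v, hvmem, hv0⟩ := Submodule.ne_bot_iff _ |>.mp hW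
    have hav : ⟪a, v⟫ = 0 := by
      have := (Submodule.mem_orthogonal _ _).mp hvmem a
        (Submodule.mem_span_singleton_self a)
      exact this
    have hbv : ⟪b, v⟫ = 0 := by
      have h4 : ‖a‖ • b = -(‖b‖ • a) := by
        rw [← sub_eq_zero]; rw [sub_neg_eq_add, add_comm]; exact hu
      have h5 : ⟪‖a‖ • b, v⟫ = 0 := by
        rw [h4, inner_neg_left, real_inner_smul_left, hav]; ring
      rw [real_inner_smul_left] at h5
      have hna : ‖a‖ ≠ 0 := norm_ne_zero_iff.mpr ha
      exact (mul_eq_zero.mp h5).resolve_left hna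
    refine ⟨‖v‖⁻¹ • v, norm_smul_inv_norm hv0, ?_, ?_⟩
    · rw [real_inner_smul_right, hav]; simp
    · rw [real_inner_smul_right, hbv]; simp
  · set u := ‖b‖ • a + ‖a‖ • b with hudef
    have hau : 0 ≤ ⟪a, u⟫ := by
      rw [hudef, inner_add_right, real_inner_smul_right, real_inner_smul_right,
        real_inner_self_eq_norm_sq]
      nlinarith [abs_le.mp (abs_real_inner_le_norm a b), norm_nonneg a, norm_nonneg b]
    have hbu : 0 ≤ ⟪b, u⟫ := by
      rw [hudef, inner_add_right, real_inner_smul_right, real_inner_smul_right,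
        real_inner_self_eq_norm_sq, real_inner_comm a b]
      nlinarith [abs_le.mp (abs_real_inner_le_norm a b), norm_nonneg a, norm_nonneg b]
    refine ⟨‖u‖⁻¹ • u, norm_smul_inv_norm hu, ?_, ?_⟩
    · rw [real_inner_smul_right]
      exact mul_nonneg (inv_nonneg.mpr (norm_nonneg u)) hau
    · rw [real_inner_smul_right]
      exact mul_nonneg (inv_nonneg.mpr (norm_nonneg u)) hbu

end Helpers4

section MainProof
open Set
open scoped RealInnerProductSpace

lemma lip_weaken {E : Type*} [PseudoEMetricSpace E] {f : ℝ → E} {K K' : ℝ≥0} {s : Set ℝ}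
    (h : LipschitzOnWith K f s) (hK : K ≤ K') : LipschitzOnWith K' f s :=
  fun x hx y hy => le_trans (h hx hy) (mul_le_mul_left (ENNReal.coe_le_coe.mpr hK) _)

set_option maxHeartbeats 2000000

theorem LNE_of_lipschitz_regular_at_infinity (n k : ℕ) (hk : 1 < k)
    (X : Set (EuclideanSpace ℝ (Fin n))) (hXcl : IsClosed X) (hXub : ¬ Bornology.IsBounded X)
    (K₁ : Set (EuclideanSpace ℝ (Fin k))) (hK₁ : IsCompact K₁)
    (K₂ : Set (EuclideanSpace ℝ (Fin n))) (hK₂ : IsCompact K₂)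
    (ψ : EuclideanSpace ℝ (Fin k) → EuclideanSpace ℝ (Fin n))
    (hbij : Set.BijOn ψ (Set.univ \ K₁) (X \ K₂))
    (l₁ l₂ : ℝ) (hl₁ : 0 < l₁)
    (hbil : ∀ p ∈ Set.univ \ K₁, ∀ q ∈ Set.univ \ K₁,
      l₁ * ‖p - q‖ ≤ ‖ψ p - ψ q‖ ∧ ‖ψ p - ψ q‖ ≤ l₂ * ‖p - q‖) :
    ∃ K : Set (EuclideanSpace ℝ (Fin n)), IsCompact K ∧
      ∃ lam : ℝ, ∀ p ∈ X \ K, ∀ q ∈ X \ K,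
        innerEDist (X \ K) p q ≤ ENNReal.ofReal (lam * ‖p - q‖) := by
  classical
  obtain ⟨R, hRK⟩ := hK₁.isBounded.subset_closedBall 0
  set r₁ : ℝ := max R 0 + 1 with hr₁def
  have hr₁1 : 1 ≤ r₁ := by
    have := le_max_right R 0; simp only [hr₁def]; linarith
  have hr₁0 : 0 < r₁ := lt_of_lt_of_le one_pos hr₁1
  have hK₁sub : K₁ ⊆ Metric.closedBall 0 r₁ := by
    refine hRK.trans (Metric.closedBall_subset_closedBall ?_)
    have := le_max_left R 0; simp only [hr₁def]; linarith
  have hout : ∀ c : EuclideanSpace ℝ (Fin k), r₁ < ‖c‖ → c ∈ Set.univ \ K₁ := by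
    intro c hc
    refine ⟨trivial, fun hcK => ?_⟩
    have := mem_closedBall_zero_iff.mp (hK₁sub hcK)
    linarith
  have hkpos : 0 < k := by omega
  -- l₁ ≤ l₂
  have hl₂ : l₁ ≤ l₂ := by
    set e : EuclideanSpace ℝ (Fin k) := EuclideanSpace.single ⟨0, hkpos⟩ (1:ℝ) with hedef
    have he : ‖e‖ = 1 := by rw [hedef, EuclideanSpace.norm_single]; norm_num
    set p₁ : EuclideanSpace ℝ (Fin k) := (r₁+1) • e
    set p₂ : EuclideanSpace ℝ (Fin k) := (r₁+2) • e
    have hp₁ : ‖p₁‖ = r₁ + 1 := by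
      rw [norm_smul, Real.norm_eq_abs, he, abs_of_pos (by linarith), mul_one]
    have hp₂ : ‖p₂‖ = r₁ + 2 := by
      rw [norm_smul, Real.norm_eq_abs, he, abs_of_pos (by linarith), mul_one]
    have hdiff : ‖p₁ - p₂‖ = 1 := by
      have : p₁ - p₂ = (-1 : ℝ) • e := by
        rw [← sub_smul]; norm_num
      rw [this, norm_smul, Real.norm_eq_abs, he]; norm_num
    have h1 := hbil p₁ (hout p₁ (by rw [hp₁]; linarith)) p₂ (hout p₂ (by rw [hp₂]; linarith))
    rw [hdiff, mul_one, mul_one] at h1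
    linarith [h1.1, h1.2]
  have hl₂0 : 0 < l₂ := lt_of_lt_of_le hl₁ hl₂
  have hψlip : LipschitzOnWith l₂.toNNReal ψ (Set.univ \ K₁) := by
    apply LipschitzOnWith.of_dist_le_mul
    intro x hx y hy
    rw [dist_eq_norm, dist_eq_norm, Real.coe_toNNReal _ hl₂0.le]
    exact (hbil x hx y hy).2
  set S := ψ '' (Metric.closedBall 0 r₁ \ K₁) with hSdef
  have hSb : Bornology.IsBounded S := by
    rcases S.eq_empty_or_nonempty with h | ⟨x₀, hx₀⟩
    · rw [h]; exact Bornology.isBounded_empty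
    · obtain ⟨d₀, hd₀, rfl⟩ := hx₀
      rw [Metric.isBounded_iff_subset_closedBall (ψ d₀)]
      refine ⟨l₂ * (2*r₁), ?_⟩
      rintro x ⟨d, hd, rfl⟩
      rw [Metric.mem_closedBall, dist_eq_norm]
      have hd' : d ∈ Set.univ \ K₁ := ⟨trivial, hd.2⟩
      have hd₀' : d₀ ∈ Set.univ \ K₁ := ⟨trivial, hd₀.2⟩
      calc ‖ψ d - ψ d₀‖ ≤ l₂ * ‖d - d₀‖ := (hbil d hd' d₀ hd₀').2
        _ ≤ l₂ * (2*r₁) := by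
            apply mul_le_mul_of_nonneg_left _ hl₂0.le
            have h1 : ‖d‖ ≤ r₁ := mem_closedBall_zero_iff.mp hd.1
            have h2 : ‖d₀‖ ≤ r₁ := mem_closedBall_zero_iff.mp hd₀.1
            calc ‖d - d₀‖ ≤ ‖d‖ + ‖d₀‖ := norm_sub_le _ _
              _ ≤ 2*r₁ := by linarith
  set K : Set (EuclideanSpace ℝ (Fin n)) := K₂ ∪ closure S with hKdef
  refine ⟨K, hK₂.union hSb.isCompact_closure, (l₂ * (6*r₁+45)) / l₁, ?_⟩
  intro p hp q hq
  have hget : ∀ x ∈ X \ K, ∃ c, ψ c = x ∧ r₁ < ‖c‖ := by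
    intro x hx
    have hx2 : x ∈ X \ K₂ := ⟨hx.1, fun h => hx.2 (Or.inl h)⟩
    obtain ⟨c, hcmem, hcx⟩ := hbij.surjOn hx2
    refine ⟨c, hcx, ?_⟩
    by_contra hle
    push_neg at hle
    exact hx.2 (Or.inr (subset_closure ⟨c, ⟨mem_closedBall_zero_iff.mpr hle, hcmem.2⟩, hcx⟩))
  obtain ⟨a, rfl, ha⟩ := hget p hp
  obtain ⟨b, rfl, hb⟩ := hget q hq
  set m : ℝ := min ‖a‖ ‖b‖ with hmdef
  have hm : r₁ < m := lt_min ha hb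
  have hm0 : 0 < m := lt_trans hr₁0 hm
  have hma : m ≤ ‖a‖ := min_le_left _ _
  have hmb : m ≤ ‖b‖ := min_le_right _ _
  have hna : 0 < ‖a‖ := lt_of_lt_of_le hm0 hma
  have hnb : 0 < ‖b‖ := lt_of_lt_of_le hm0 hmb
  -- the common final step
  have step : ∀ (δ : ℝ), 0 < δ → ∀ (g : ℝ → EuclideanSpace ℝ (Fin k)) (L : ℝ≥0),
      LipschitzOnWith L g (Icc 0 3) → g 0 = a → g 3 = b →
      (∀ t ∈ Icc (0:ℝ) 3, r₁ + δ ≤ ‖g t‖) →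
      innerEDist (X \ K) (ψ a) (ψ b) ≤ ENNReal.ofReal (l₂ * ((L:ℝ) * 3)) := by
    intro δ hδ g L hg h0 h3 hnorm
    have hmaps : Set.MapsTo g (Icc 0 3) (Set.univ \ K₁) := by
      intro t ht
      exact hout _ (lt_of_lt_of_le (by linarith) (hnorm t ht))
    have hGlip : LipschitzOnWith (l₂.toNNReal * L) (ψ ∘ g) (Icc 0 3) :=
      hψlip.comp hg hmaps
    have hGim : ∀ t ∈ Icc (0:ℝ) 3, (ψ ∘ g) t ∈ X \ K := by
      intro t ht
      have hgt : g t ∈ Set.univ \ K₁ := hmaps ht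
      have hmem := hbij.mapsTo hgt
      refine ⟨hmem.1, ?_⟩
      rintro (h | h)
      · exact hmem.2 h
      · obtain ⟨y, hyS, hdy⟩ := Metric.mem_closure_iff.mp h (l₁ * δ) (by positivity)
        obtain ⟨d, hd, rfl⟩ := hyS
        have hbound := (hbil (g t) hgt d ⟨trivial, hd.2⟩).1
        have hdist : δ ≤ ‖g t - d‖ := by
          have h1 : ‖d‖ ≤ r₁ := mem_closedBall_zero_iff.mp hd.1
          have h2 := hnorm t ht
          calc δ ≤ ‖g t‖ - ‖d‖ := by linarith
            _ ≤ ‖g t - d‖ := by linarith [norm_sub_norm_le (g t) d]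
        rw [dist_eq_norm] at hdy
        have := mul_le_mul_of_nonneg_left hdist hl₁.le
        simp only [Function.comp] at hdy
        linarith
    have hkey := innerEDist_le_of_lipschitz (X \ K)
      (p := ψ a) (q := ψ b) (g := ψ ∘ g) (T := 3) (hT := by norm_num)
      (L := l₂.toNNReal * L) (hg := hGlip) (h0 := by simp only [Function.comp_apply, h0])
      (h1 := by simp only [Function.comp_apply, h3]) (him := hGim)
    refine hkey.trans (le_of_eq ?_)
    rw [ENNReal.coe_mul, mul_assoc, ENNReal.ofReal_mul hl₂0.le,
      ENNReal.ofReal_mul (by positivity : (0:ℝ) ≤ (L:ℝ)), ENNReal.ofReal_coe_nnreal]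
    simp [ENNReal.ofReal]
  -- the final comparison
  have final : ∀ L : ℝ≥0, (L:ℝ) * 3 ≤ (6*r₁+45) * ‖a - b‖ →
      ENNReal.ofReal (l₂ * ((L:ℝ) * 3)) ≤
        ENNReal.ofReal ((l₂ * (6*r₁+45)) / l₁ * ‖ψ a - ψ b‖) := by
    intro L hL
    apply ENNReal.ofReal_le_ofReal
    have hab : l₁ * ‖a - b‖ ≤ ‖ψ a - ψ b‖ :=
      (hbil a (hout a ha) b (hout b hb)).1
    have hcoef : (0:ℝ) ≤ l₂ * (6*r₁+45) := by
      apply mul_nonneg hl₂0.le; linarith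
    calc l₂ * ((L:ℝ) * 3) ≤ l₂ * ((6*r₁+45) * ‖a - b‖) :=
          mul_le_mul_of_nonneg_left hL hl₂0.le
      _ = (l₂ * (6*r₁+45)) * ‖a - b‖ := by ring
      _ ≤ (l₂ * (6*r₁+45)) / l₁ * ‖ψ a - ψ b‖ := by
          rw [div_mul_eq_mul_div, le_div_iff₀ hl₁]
          calc l₂ * (6*r₁+45) * ‖a - b‖ * l₁ = (l₂ * (6*r₁+45)) * (l₁ * ‖a - b‖) := by ring
            _ ≤ (l₂ * (6*r₁+45)) * ‖ψ a - ψ b‖ := mul_le_mul_of_nonneg_left hab hcoef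
  by_cases hcase : ‖a - b‖ ≤ m / 2
  · -- Case A : radial + projected chord
    set a' : EuclideanSpace ℝ (Fin k) := (m/‖a‖) • a with ha'def
    set b' : EuclideanSpace ℝ (Fin k) := (m/‖b‖) • b with hb'def
    have ha'n : ‖a'‖ = m := by
      rw [ha'def, norm_smul, Real.norm_eq_abs, abs_of_nonneg (by positivity)]
      field_simp
    have hb'n : ‖b'‖ = m := by
      rw [hb'def, norm_smul, Real.norm_eq_abs, abs_of_nonneg (by positivity)]
      field_simp
    have hsubnorm : ‖a‖ - m ≤ ‖a - b‖ ∧ ‖b‖ - m ≤ ‖a - b‖ := by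
      constructor
      · rcases le_total ‖a‖ ‖b‖ with h | h
        · rw [hmdef, min_eq_left h]; simp [norm_nonneg]
        · rw [hmdef, min_eq_right h]; linarith [norm_sub_norm_le a b]
      · rcases le_total ‖a‖ ‖b‖ with h | h
        · rw [hmdef, min_eq_left h]
          linarith [norm_sub_norm_le b a, norm_sub_rev a b]
        · rw [hmdef, min_eq_right h]; simp [norm_nonneg]
    have haa' : ‖a - a'‖ ≤ ‖a - b‖ := by
      have : a - a' = (1 - m/‖a‖) • a := by
        rw [ha'def, sub_smul, one_smul]
      rw [this, norm_smul, Real.norm_eq_abs,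
        abs_of_nonneg (by rw [sub_nonneg, div_le_one hna]; exact hma)]
      have : (1 - m/‖a‖) * ‖a‖ = ‖a‖ - m := by field_simp
      rw [this]; exact hsubnorm.1
    have hbb' : ‖b - b'‖ ≤ ‖a - b‖ := by
      have : b - b' = (1 - m/‖b‖) • b := by
        rw [hb'def, sub_smul, one_smul]
      rw [this, norm_smul, Real.norm_eq_abs,
        abs_of_nonneg (by rw [sub_nonneg, div_le_one hnb]; exact hmb)]
      have : (1 - m/‖b‖) * ‖b‖ = ‖b‖ - m := by field_simp
      rw [this]; exact hsubnorm.2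
    have hab' : ‖a' - b'‖ ≤ 3 * ‖a - b‖ := by
      calc ‖a' - b'‖ = ‖(a' - a) + ((a - b) + (b - b'))‖ := by abel_nf
        _ ≤ ‖a' - a‖ + ‖(a - b) + (b - b')‖ := norm_add_le _ _
        _ ≤ ‖a' - a‖ + (‖a - b‖ + ‖b - b'‖) := by
            linarith [norm_add_le (a - b) (b - b')]
        _ ≤ 3 * ‖a - b‖ := by
            rw [norm_sub_rev a' a]
            linarith
    have hch : ∀ u ∈ Icc (0:ℝ) 1, m/2 ≤ ‖a' + u • (b' - a')‖ := by
      intro u hu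
      have h := chord_sq_bound a' b' ha'n hb'n hu.1 hu.2
      apply le_norm_of_sq (by positivity) (norm_nonneg _)
      have h2 : ‖b' - a'‖ ≤ (3/2) * m := by
        rw [norm_sub_rev]; linarith
      nlinarith [norm_nonneg (b' - a')]
    set arc : ℝ → EuclideanSpace ℝ (Fin k) :=
      fun u => (m/‖a' + u • (b' - a')‖) • (a' + u • (b' - a')) with harcdef
    set g : ℝ → EuclideanSpace ℝ (Fin k) := fun t =>
      if t ≤ 1 then a + t • (a' - a)
      else if t ≤ 2 then arc (t - 1)
      else b' + (t - 2) • (b - b') with hgdef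
    set L : ℝ≥0 := (12 * ‖a - b‖).toNNReal with hLdef
    have hLcoe : (L:ℝ) = 12 * ‖a - b‖ := Real.coe_toNNReal _ (by positivity)
    have hp1 : LipschitzOnWith L g (Icc 0 1) := by
      apply lip_congr (f := fun t : ℝ => a + t • (a' - a))
      · intro t ht
        simp only [hgdef]
        rw [if_pos ht.2]
      · apply lip_weaken ((lip_seg a (a' - a)).lipschitzOnWith)
        rw [← NNReal.coe_le_coe, coe_nnnorm, hLcoe, norm_sub_rev]
        linarith [haa', norm_nonneg (a - b)]
    have harclip : LipschitzOnWith (4 * ‖b' - a'‖).toNNReal arc (Icc 0 1) := by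
      apply LipschitzOnWith.of_dist_le_mul
      intro u hu v hv
      rw [dist_eq_norm, Real.coe_toNNReal _ (by positivity), Real.dist_eq]
      have hns := norm_scale_lip hm0.le (half_pos hm0) (a' + u • (b' - a'))
        (a' + v • (b' - a')) (hch u hu) (hch v hv)
      have hdiff : (a' + u • (b' - a')) - (a' + v • (b' - a')) = (u - v) • (b' - a') := by
        rw [sub_smul]; abel
      rw [hdiff, norm_smul, Real.norm_eq_abs] at hns
      have h4 : 2 * m / (m / 2) = 4 := by field_simp; ring
      rw [h4] at hns
      simp only [harcdef]
      calc ‖(m/‖a' + u • (b' - a')‖) • (a' + u • (b' - a')) -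
            (m/‖a' + v • (b' - a')‖) • (a' + v • (b' - a'))‖
          ≤ 4 * (|u - v| * ‖b' - a'‖) := hns
        _ = 4 * ‖b' - a'‖ * |u - v| := by ring
    have hshift1 : LipschitzOnWith 1 (fun t : ℝ => t - 1) (Icc 1 2) := by
      apply LipschitzOnWith.of_dist_le_mul
      intro u _ v _
      have e : u - 1 - (v - 1) = u - v := by ring
      rw [Real.dist_eq, Real.dist_eq, e, NNReal.coe_one, one_mul]
    have hp2 : LipschitzOnWith L g (Icc 1 2) := by
      apply lip_congr (f := (arc ∘ fun t : ℝ => t - 1))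
      · intro t ht
        by_cases h1 : t ≤ 1
        · have ht1 : t = 1 := le_antisymm h1 ht.1
          subst ht1
          simp only [hgdef, Function.comp_apply]
          rw [if_pos le_rfl]
          have e1 : (1:ℝ) - 1 = 0 := by norm_num
          rw [e1]
          simp only [harcdef]
          rw [zero_smul, add_zero, ha'n, div_self hm0.ne', one_smul, one_smul]
          abel
        · push_neg at h1
          simp only [hgdef, Function.comp_apply]
          rw [if_neg (not_le.mpr h1), if_pos ht.2]
      · refine lip_weaken (harclip.comp hshift1 ?_) ?_
        · intro t ht
          simp only [mem_Icc] at ht ⊢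
          constructor <;> linarith
        · rw [mul_one, ← NNReal.coe_le_coe, hLcoe, Real.coe_toNNReal _ (by positivity),
            norm_sub_rev]
          linarith [hab']
    have hshift2 : LipschitzOnWith 1 (fun t : ℝ => t - 2) (Icc 2 3) := by
      apply LipschitzOnWith.of_dist_le_mul
      intro u _ v _
      have e : u - 2 - (v - 2) = u - v := by ring
      rw [Real.dist_eq, Real.dist_eq, e, NNReal.coe_one, one_mul]
    have hp3 : LipschitzOnWith L g (Icc 2 3) := by
      apply lip_congr (f := ((fun u : ℝ => b' + u • (b - b')) ∘ fun t : ℝ => t - 2))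
      · intro t ht
        by_cases h2 : t ≤ 2
        · have ht2 : t = 2 := le_antisymm h2 ht.1
          subst ht2
          simp only [hgdef, Function.comp_apply]
          rw [if_neg (by norm_num), if_pos le_rfl]
          have e1 : (2:ℝ) - 1 = 1 := by norm_num
          have e2 : (2:ℝ) - 2 = 0 := by norm_num
          rw [e1, e2, zero_smul, add_zero]
          simp only [harcdef]
          have e3 : a' + (1:ℝ) • (b' - a') = b' := by rw [one_smul]; abel
          rw [e3, hb'n, div_self hm0.ne', one_smul]
        · push_neg at h2
          simp only [hgdef, Function.comp_apply]
          rw [if_neg (by push_neg; linarith : ¬ t ≤ 1), if_neg (not_le.mpr h2)]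
      · refine lip_weaken (((lip_seg b' (b - b')).lipschitzOnWith (s := univ)).comp hshift2
          (fun t _ => mem_univ _)) ?_
        · rw [mul_one, ← NNReal.coe_le_coe, coe_nnnorm, hLcoe]
          linarith [hbb', norm_nonneg (a - b)]
    have hglip : LipschitzOnWith L g (Icc 0 3) :=
      lip_glue (by norm_num) (by norm_num)
        (lip_glue (by norm_num) (by norm_num) hp1 hp2) hp3
    have hg0 : g 0 = a := by
      simp only [hgdef]
      rw [if_pos (by norm_num : (0:ℝ) ≤ 1), zero_smul, add_zero]
    have hg3 : g 3 = b := by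
      simp only [hgdef]
      rw [if_neg (by norm_num), if_neg (by norm_num)]
      have e1 : (3:ℝ) - 2 = 1 := by norm_num
      rw [e1, one_smul]
      abel
    have hgnorm : ∀ t ∈ Icc (0:ℝ) 3, r₁ + (m - r₁) ≤ ‖g t‖ := by
      intro t ht
      have hrm : r₁ + (m - r₁) = m := by ring
      rw [hrm]
      simp only [hgdef]
      by_cases h1 : t ≤ 1
      · rw [if_pos h1]
        have hrw : a + t • (a' - a) = (1 + t * (m/‖a‖ - 1)) • a := by
          rw [ha'def]
          have e : (m/‖a‖) • a - a = (m/‖a‖ - 1) • a := by rw [sub_smul, one_smul]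
          rw [e, smul_smul, add_smul, one_smul]
        rw [hrw, norm_smul, Real.norm_eq_abs]
        have hs1 : m/‖a‖ ≤ 1 := (div_le_one hna).mpr hma
        have hs0 : 0 < m/‖a‖ := by positivity
        have hsge : m/‖a‖ ≤ 1 + t * (m/‖a‖ - 1) := by nlinarith [ht.1]
        rw [abs_of_pos (lt_of_lt_of_le hs0 hsge)]
        calc m = (m/‖a‖) * ‖a‖ := by field_simp
          _ ≤ (1 + t * (m/‖a‖ - 1)) * ‖a‖ := mul_le_mul_of_nonneg_right hsge hna.le
      · rw [if_neg h1]
        push_neg at h1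
        by_cases h2 : t ≤ 2
        · rw [if_pos h2]
          have hu : t - 1 ∈ Icc (0:ℝ) 1 := ⟨by linarith, by linarith⟩
          have hcc := hch (t-1) hu
          simp only [harcdef]
          rw [norm_smul, Real.norm_eq_abs, abs_of_nonneg (by positivity)]
          rw [div_mul_cancel₀ _ (ne_of_gt (lt_of_lt_of_le (by linarith) hcc))]
        · rw [if_neg h2]
          push_neg at h2
          have hu0 : (0:ℝ) ≤ t - 2 := by linarith
          have hu1 : t - 2 ≤ 1 := by linarith [ht.2]
          have hrw : b' + (t-2) • (b - b') = (m/‖b‖ + (t-2) * (1 - m/‖b‖)) • b := by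
            rw [hb'def]
            have e : b - (m/‖b‖) • b = (1 - m/‖b‖) • b := by rw [sub_smul, one_smul]
            rw [e, smul_smul, add_smul]
          rw [hrw, norm_smul, Real.norm_eq_abs]
          have hs1 : m/‖b‖ ≤ 1 := (div_le_one hnb).mpr hmb
          have hs0 : 0 < m/‖b‖ := by positivity
          have hsge : m/‖b‖ ≤ m/‖b‖ + (t-2) * (1 - m/‖b‖) := by nlinarith
          rw [abs_of_pos (lt_of_lt_of_le hs0 hsge)]
          calc m = (m/‖b‖) * ‖b‖ := by field_simp
            _ ≤ (m/‖b‖ + (t-2) * (1 - m/‖b‖)) * ‖b‖ :=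
                mul_le_mul_of_nonneg_right hsge hnb.le
    have hfin := step (m - r₁) (by linarith) g L hglip hg0 hg3 hgnorm
    refine hfin.trans (final L ?_)
    rw [hLcoe]
    nlinarith [norm_nonneg (a - b), hr₁1]
  · -- Case B : over the top via a good direction
    push_neg at hcase
    obtain ⟨w, hw1, haw, hbw⟩ := exists_good_dir hk a b
      (norm_pos_iff.mp hna) (norm_pos_iff.mp hnb)
    set s₀ : ℝ := r₁ + 1 with hs₀def
    have hs₀0 : 0 < s₀ := by simp only [hs₀def]; linarith
    set g : ℝ → EuclideanSpace ℝ (Fin k) := fun t =>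
      if t ≤ 1 then a + t • (s₀ • w)
      else if t ≤ 2 then (a + s₀ • w) + (t - 1) • (b - a)
      else b + (3 - t) • (s₀ • w) with hgdef
    set L : ℝ≥0 := (s₀ + ‖a - b‖).toNNReal with hLdef
    have hLcoe : (L:ℝ) = s₀ + ‖a - b‖ :=
      Real.coe_toNNReal _ (by positivity)
    have hsw : ‖s₀ • w‖ = s₀ := by
      rw [norm_smul, Real.norm_eq_abs, hw1, abs_of_pos hs₀0, mul_one]
    have hp1 : LipschitzOnWith L g (Icc 0 1) := by
      apply lip_congr (f := fun t : ℝ => a + t • (s₀ • w))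
      · intro t ht
        simp only [hgdef]
        rw [if_pos ht.2]
      · apply lip_weaken ((lip_seg a (s₀ • w)).lipschitzOnWith)
        rw [← NNReal.coe_le_coe, coe_nnnorm, hLcoe, hsw]
        linarith [norm_nonneg (a - b)]
    have hshiftB1 : LipschitzOnWith 1 (fun t : ℝ => t - 1) (Icc 1 2) := by
      apply LipschitzOnWith.of_dist_le_mul
      intro u _ v _
      have e : u - 1 - (v - 1) = u - v := by ring
      rw [Real.dist_eq, Real.dist_eq, e, NNReal.coe_one, one_mul]
    have hp2 : LipschitzOnWith L g (Icc 1 2) := by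
      apply lip_congr (f := ((fun u : ℝ => (a + s₀ • w) + u • (b - a)) ∘ fun t : ℝ => t - 1))
      · intro t ht
        by_cases h1 : t ≤ 1
        · have ht1 : t = 1 := le_antisymm h1 ht.1
          subst ht1
          simp only [hgdef, Function.comp_apply]
          rw [if_pos le_rfl]
          have e1 : (1:ℝ) - 1 = 0 := by norm_num
          rw [e1, zero_smul, add_zero, one_smul]
        · push_neg at h1
          simp only [hgdef, Function.comp_apply]
          rw [if_neg (not_le.mpr h1), if_pos ht.2]
      · refine lip_weaken (((lip_seg (a + s₀ • w) (b - a)).lipschitzOnWith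
          (s := univ)).comp hshiftB1 (fun t _ => mem_univ _)) ?_
        rw [mul_one, ← NNReal.coe_le_coe, coe_nnnorm, hLcoe, norm_sub_rev]
        linarith [hs₀0]
    have hshiftB2 : LipschitzOnWith 1 (fun t : ℝ => 3 - t) (Icc 2 3) := by
      apply LipschitzOnWith.of_dist_le_mul
      intro u _ v _
      have e : |3 - u - (3 - v)| = |u - v| := by rw [abs_sub_comm]; congr 1; ring
      rw [Real.dist_eq, Real.dist_eq, e, NNReal.coe_one, one_mul]
    have hp3 : LipschitzOnWith L g (Icc 2 3) := by
      apply lip_congr (f := ((fun u : ℝ => b + u • (s₀ • w)) ∘ fun t : ℝ => 3 - t))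
      · intro t ht
        by_cases h2 : t ≤ 2
        · have ht2 : t = 2 := le_antisymm h2 ht.1
          subst ht2
          simp only [hgdef, Function.comp_apply]
          rw [if_neg (by norm_num), if_pos le_rfl]
          have e1 : (2:ℝ) - 1 = 1 := by norm_num
          have e2 : (3:ℝ) - 2 = 1 := by norm_num
          rw [e1, e2, one_smul, one_smul]
          abel
        · push_neg at h2
          simp only [hgdef, Function.comp_apply]
          rw [if_neg (by push_neg; linarith : ¬ t ≤ 1), if_neg (not_le.mpr h2)]
      · refine lip_weaken (((lip_seg b (s₀ • w)).lipschitzOnWith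
          (s := univ)).comp hshiftB2 (fun t _ => mem_univ _)) ?_
        rw [mul_one, ← NNReal.coe_le_coe, coe_nnnorm, hLcoe, hsw]
        linarith [norm_nonneg (a - b)]
    have hglip : LipschitzOnWith L g (Icc 0 3) :=
      lip_glue (by norm_num) (by norm_num)
        (lip_glue (by norm_num) (by norm_num) hp1 hp2) hp3
    have hg0 : g 0 = a := by
      simp only [hgdef]
      rw [if_pos (by norm_num : (0:ℝ) ≤ 1), zero_smul, add_zero]
    have hg3 : g 3 = b := by
      simp only [hgdef]
      rw [if_neg (by norm_num), if_neg (by norm_num)]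
      have e1 : (3:ℝ) - 3 = 0 := by norm_num
      rw [e1, zero_smul, add_zero]
    set δ : ℝ := min (m - r₁) 1 with hδdef
    have hδ0 : 0 < δ := lt_min (by linarith) one_pos
    have hδm : r₁ + δ ≤ m := by
      have := min_le_left (m - r₁) 1
      simp only [hδdef]; linarith
    have hδs : r₁ + δ ≤ s₀ := by
      have := min_le_right (m - r₁) 1
      simp only [hδdef, hs₀def]; linarith
    have hgnorm : ∀ t ∈ Icc (0:ℝ) 3, r₁ + δ ≤ ‖g t‖ := by
      intro t ht
      simp only [hgdef]
      by_cases h1 : t ≤ 1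
      · rw [if_pos h1]
        have hrw : a + t • (s₀ • w) = a + (t * s₀) • w := by rw [smul_smul]
        rw [hrw]
        have hv := vertical_sq_bound a w hw1 haw hs₀0.le ht.1
        have := le_norm_of_sq (norm_nonneg a) (norm_nonneg _) hv
        linarith [hma, hδm]
      · rw [if_neg h1]
        push_neg at h1
        by_cases h2 : t ≤ 2
        · rw [if_pos h2]
          have hrw : (a + s₀ • w) + (t - 1) • (b - a)
              = (a + (t - 1) • (b - a)) + s₀ • w := by abel
          rw [hrw]
          have hcw : (0:ℝ) ≤ inner ℝ (a + (t - 1) • (b - a)) w := by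
            rw [inner_add_left, real_inner_smul_left, inner_sub_left]
            nlinarith [haw, hbw]
          have hh := horizontal_sq_bound (a + (t - 1) • (b - a)) w hw1 hcw hs₀0.le
          have := le_norm_of_sq hs₀0.le (norm_nonneg _) hh
          linarith [hδs]
        · rw [if_neg h2]
          push_neg at h2
          have hrw : b + (3 - t) • (s₀ • w) = b + ((3 - t) * s₀) • w := by rw [smul_smul]
          rw [hrw]
          have hv := vertical_sq_bound b w hw1 hbw hs₀0.le (by linarith [ht.2] : (0:ℝ) ≤ 3 - t)
          have := le_norm_of_sq (norm_nonneg b) (norm_nonneg _) hv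
          linarith [hmb, hδm]
    have hfin := step δ hδ0 g L hglip hg0 hg3 hgnorm
    refine hfin.trans (final L ?_)
    rw [hLcoe]
    have habhalf : 1/2 ≤ ‖a - b‖ := by linarith
    simp only [hs₀def]
    nlinarith [mul_nonneg (by linarith : (0:ℝ) ≤ 6*r₁+42)
      (by linarith : (0:ℝ) ≤ ‖a - b‖ - 1/2)]


end MainProof

end
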